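/- Let ℓ be a learning function and fix h in the simplex Δ^{K−1}. Let s ∈ ℝ_+^K be a nonzero feasible profile, i.e. ∑_{k=1}^K ℓ(s_k) ≤ 1, and let π = s/‖s‖₁. Then ‖s‖₁ · min{ π_k / h_k : h_k > 0 } ≤ H(h), with equality if and only if s = H(h)·h. -/

import Mathlib

open Finset

noncomputable section

/-- The simplex Δ^{K-1}: nonnegative coordinates summing to 1. -/
def simplex (K : ℕ) : Set (Fin K → ℝ) :=
  {π | (∀ k, 0 ≤ π k) ∧ ∑ k, π k = 1}

/-- ℓ¹-norm on ℝ^K. -/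
def l1 {K : ℕ} (a : Fin K → ℝ) : ℝ := ∑ k, |a k|

/-- Coverage operator C(a,b) = ∑ min(a_k, b_k). -/
def Cov {K : ℕ} (a b : Fin K → ℝ) : ℝ := ∑ k, min (a k) (b k)

/-- A learning function ℓ : [0,∞) → [0,∞): continuous, strictly increasing,
strictly concave, ℓ(0)=0, ℓ(1)=1, continuously differentiable on [0,1]
with derivative `deriv`, ℓ'(1) > 0 (finiteness of ℓ'(0) is automatic). -/
structure LearningFunction where
  toFun : ℝ → ℝ
  deriv : ℝ → ℝ
  continuousOn : ContinuousOn toFun (Set.Ici 0)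
  strictMonoOn : StrictMonoOn toFun (Set.Ici 0)
  strictConcaveOn : StrictConcaveOn ℝ (Set.Ici 0) toFun
  nonneg : ∀ s, 0 ≤ s → 0 ≤ toFun s
  map_zero : toFun 0 = 0
  map_one : toFun 1 = 1
  hasDerivAt : ∀ s ∈ Set.Icc (0:ℝ) 1,
    HasDerivWithinAt toFun (deriv s) (Set.Icc (0:ℝ) 1) s
  derivContinuousOn : ContinuousOn deriv (Set.Icc (0:ℝ) 1)
  deriv_one_pos : 0 < deriv 1

/-- Maximal feasible scale H(π) = sup { H ≥ 0 : ∑ ℓ(H π_k) ≤ 1 }. -/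
def Hscale {K : ℕ} (L : LearningFunction) (π : Fin K → ℝ) : ℝ :=
  sSup {H : ℝ | 0 ≤ H ∧ ∑ k, L.toFun (H * π k) ≤ 1}

/-- Relative inefficiency index λ(π) = 1/H(π). -/
def lam {K : ℕ} (L : LearningFunction) (π : Fin K → ℝ) : ℝ :=
  1 / Hscale L π

/-- Γ(z) = ‖z‖₁ λ(z/‖z‖₁) for z ≠ 0, Γ(0) = 0. -/
def Gam {K : ℕ} (L : LearningFunction) (z : Fin K → ℝ) : ℝ :=
  if z = 0 then 0 else l1 z * lam L (fun k => z k / l1 z)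

/-- Fragmentation index D(π) = 1 - ∑ π_k². -/
def Dfrag {K : ℕ} (π : Fin K → ℝ) : ℝ := 1 - ∑ k, (π k) ^ 2

/-- Lipschitz constant L_Γ = ℓ̄ + 2 ℓ̄³/ℓ̲. -/
def LGam (L : LearningFunction) : ℝ := L.deriv 0 + 2 * L.deriv 0 ^ 3 / L.deriv 1



lemma LF_subadd (L : LearningFunction) {a b : ℝ} (ha : 0 ≤ a) (hb : 0 ≤ b) :
    L.toFun (a + b) ≤ L.toFun a + L.toFun b := by
  rcases eq_or_lt_of_le (add_nonneg ha hb) with h0 | hc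
  · have ha0 : a = 0 := by linarith
    have hb0 : b = 0 := by linarith
    simp [ha0, hb0, L.map_zero]
  · have hcc : a + b ∈ Set.Ici (0:ℝ) := le_of_lt hc
    have h0m : (0:ℝ) ∈ Set.Ici (0:ℝ) := Set.mem_Ici.mpr le_rfl
    have hco := L.strictConcaveOn.concaveOn
    have hsum1 : a/(a+b) + b/(a+b) = 1 := by
      rw [← add_div, div_self hc.ne']
    have h1 := hco.2 hcc h0m (div_nonneg ha hc.le) (div_nonneg hb hc.le) hsum1
    have hsum2 : b/(a+b) + a/(a+b) = 1 := by linarith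
    have h2 := hco.2 hcc h0m (div_nonneg hb hc.le) (div_nonneg ha hc.le) hsum2
    simp only [smul_eq_mul, L.map_zero, mul_zero, add_zero] at h1 h2
    rw [div_mul_cancel₀ _ hc.ne'] at h1 h2
    have hkey : (a/(a+b)) * L.toFun (a+b) + (b/(a+b)) * L.toFun (a+b) = L.toFun (a+b) := by
      rw [← add_mul, hsum1, one_mul]
    linarith

lemma LF_subadd_sum (L : LearningFunction) {ι : Type*} (A : Finset ι) (x : ι → ℝ)
    (hx : ∀ i ∈ A, 0 ≤ x i) : L.toFun (∑ i ∈ A, x i) ≤ ∑ i ∈ A, L.toFun (x i) := by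
  induction A using Finset.cons_induction with
  | empty => simp [L.map_zero]
  | cons a A ha ih =>
    rw [Finset.sum_cons, Finset.sum_cons]
    have h1 : 0 ≤ x a := hx a (Finset.mem_cons_self a A)
    have h2 : ∀ i ∈ A, 0 ≤ x i := fun i hi => hx i (Finset.mem_cons_of_mem hi)
    have h3 : 0 ≤ ∑ i ∈ A, x i := Finset.sum_nonneg h2
    calc L.toFun (x a + ∑ i ∈ A, x i) ≤ L.toFun (x a) + L.toFun (∑ i ∈ A, x i) :=
          LF_subadd L h1 h3
      _ ≤ L.toFun (x a) + ∑ i ∈ A, L.toFun (x i) := by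
          have := ih h2; linarith


/-- Upper bound on integrator contribution: ‖s‖₁ · min_{k : h_k > 0} (π_k/h_k) ≤ H(h),
with equality iff s = H(h)·h. -/
theorem integrator_contribution_bound {K : ℕ} (L : LearningFunction)
    (h : Fin K → ℝ) (hh : h ∈ simplex K)
    (s : Fin K → ℝ) (hs : ∀ k, 0 ≤ s k) (hs0 : s ≠ 0)
    (hfeas : ∑ k, L.toFun (s k) ≤ 1) :
    l1 s * (⨅ k : {j : Fin K // 0 < h j}, (s k.1 / l1 s) / h k.1) ≤ Hscale L h ∧
    (l1 s * (⨅ k : {j : Fin K // 0 < h j}, (s k.1 / l1 s) / h k.1) = Hscale L h ↔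
      s = fun k => Hscale L h * h k) := by
  obtain ⟨hhn, hhsum⟩ := hh
  have hmono := L.strictMonoOn.monotoneOn
  have hTne : Nonempty {j : Fin K // 0 < h j} := by
    by_contra hne
    have hz : ∀ j, h j = 0 := fun j =>
      le_antisymm (not_lt.mp fun hj => hne ⟨⟨j, hj⟩⟩) (hhn j)
    simp [hz] at hhsum
  have hl1 : l1 s = ∑ k, s k :=
    Finset.sum_congr rfl (fun k _ => abs_of_nonneg (hs k))
  have hNpos : 0 < l1 s := by
    obtain ⟨j, hj⟩ := Function.ne_iff.mp hs0
    have hjpos : 0 < s j := lt_of_le_of_ne (hs j) (by simpa using (Ne.symm hj))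
    rw [hl1]
    exact lt_of_lt_of_le hjpos (Finset.single_le_sum (fun k _ => hs k) (mem_univ j))
  set N := l1 s with hN
  set m := ⨅ k : {j : Fin K // 0 < h j}, (s k.1 / N) / h k.1 with hm
  have hbdd : BddBelow (Set.range fun k : {j : Fin K // 0 < h j} => (s k.1 / N) / h k.1) :=
    (Set.finite_range _).bddBelow
  have hm0 : 0 ≤ m :=
    le_ciInf fun k => div_nonneg (div_nonneg (hs k.1) hNpos.le) k.2.le
  have hkey : ∀ k, N * m * h k ≤ s k := by
    intro k
    rcases eq_or_lt_of_le (hhn k) with h0 | hpos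
    · rw [← h0, mul_zero]; exact hs k
    · have h1 : m ≤ (s k / N) / h k := ciInf_le hbdd ⟨k, hpos⟩
      have h2 : N * m ≤ s k / h k := by
        calc N * m ≤ N * ((s k / N) / h k) := mul_le_mul_of_nonneg_left h1 hNpos.le
          _ = s k / h k := by field_simp
      calc N * m * h k ≤ (s k / h k) * h k := mul_le_mul_of_nonneg_right h2 (hhn k)
        _ = s k := div_mul_cancel₀ _ hpos.ne'
  set S : Set ℝ := {H : ℝ | 0 ≤ H ∧ ∑ k, L.toFun (H * h k) ≤ 1} with hSdef
  have hHeq : Hscale L h = sSup S := rfl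
  have hbddS : BddAbove S := by
    refine ⟨1, fun H hH => ?_⟩
    obtain ⟨hH0, hHf⟩ := hH
    have hsub : L.toFun H ≤ ∑ k, L.toFun (H * h k) := by
      have hHs : H = ∑ k, H * h k := by rw [← Finset.mul_sum, hhsum, mul_one]
      calc L.toFun H = L.toFun (∑ k, H * h k) := by rw [← hHs]
        _ ≤ ∑ k, L.toFun (H * h k) :=
            LF_subadd_sum L _ _ (fun k _ => mul_nonneg hH0 (hhn k))
    have hle : L.toFun H ≤ L.toFun 1 := by rw [L.map_one]; exact hsub.trans hHf
    by_contra hH1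
    push_neg at hH1
    have := L.strictMonoOn (Set.mem_Ici.mpr zero_le_one) (Set.mem_Ici.mpr hH0) hH1
    linarith
  have h0S : (0:ℝ) ∈ S := ⟨le_rfl, by simp [L.map_zero]⟩
  have hH0 : 0 ≤ Hscale L h := by rw [hHeq]; exact le_csSup hbddS h0S
  have htS : N * m ∈ S := by
    refine ⟨mul_nonneg hNpos.le hm0, ?_⟩
    calc ∑ k, L.toFun (N * m * h k) ≤ ∑ k, L.toFun (s k) :=
        Finset.sum_le_sum fun k _ =>
          hmono (Set.mem_Ici.mpr (mul_nonneg (mul_nonneg hNpos.le hm0) (hhn k)))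
            (Set.mem_Ici.mpr (hs k)) (hkey k)
      _ ≤ 1 := hfeas
  have hineq : N * m ≤ Hscale L h := by rw [hHeq]; exact le_csSup hbddS htS
  refine ⟨hineq, ?_, ?_⟩
  · intro heq
    by_contra hne
    obtain ⟨j, hj⟩ := Function.ne_iff.mp hne
    have hkey' : ∀ k, Hscale L h * h k ≤ s k := fun k => heq ▸ hkey k
    have hstrict : Hscale L h * h j < s j := lt_of_le_of_ne (hkey' j) (Ne.symm hj)
    have hlt : ∑ k, L.toFun (Hscale L h * h k) < 1 := by
      have hsumlt : ∑ k, L.toFun (Hscale L h * h k) < ∑ k, L.toFun (s k) := by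
        refine Finset.sum_lt_sum
          (fun k _ => hmono (Set.mem_Ici.mpr (mul_nonneg hH0 (hhn k)))
            (Set.mem_Ici.mpr (hs k)) (hkey' k)) ⟨j, mem_univ j, ?_⟩
        exact L.strictMonoOn (Set.mem_Ici.mpr (mul_nonneg hH0 (hhn j)))
          (Set.mem_Ici.mpr (hs j)) hstrict
      linarith
    have hcont : ContinuousWithinAt (fun H => ∑ k, L.toFun (H * h k))
        (Set.Ici 0) (Hscale L h) := by
      have : ContinuousOn (fun H : ℝ => ∑ k, L.toFun (H * h k)) (Set.Ici 0) := by
        apply continuousOn_finset_sum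
        intro k _
        exact L.continuousOn.comp (continuousOn_id.mul continuousOn_const)
          (fun H hH => Set.mem_Ici.mpr (mul_nonneg hH (hhn k)))
      exact this _ (Set.mem_Ici.mpr hH0)
    have hpre : (fun H => ∑ k, L.toFun (H * h k)) ⁻¹' Set.Iio 1 ∈
        nhdsWithin (Hscale L h) (Set.Ici 0) := hcont (Iio_mem_nhds hlt)
    have hmono' : nhdsWithin (Hscale L h) (Set.Ioi (Hscale L h)) ≤
        nhdsWithin (Hscale L h) (Set.Ici 0) :=
      nhdsWithin_mono _ (fun x hx => le_trans hH0 (le_of_lt hx))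
    have hev : ∀ᶠ H' in nhdsWithin (Hscale L h) (Set.Ioi (Hscale L h)),
        ∑ k, L.toFun (H' * h k) < 1 := hmono' hpre
    obtain ⟨H', hH'lt, hH'mem⟩ := (hev.and eventually_mem_nhdsWithin).exists
    have hH'S : H' ∈ S := ⟨le_trans hH0 (le_of_lt hH'mem), hH'lt.le⟩
    have : H' ≤ Hscale L h := by rw [hHeq]; exact le_csSup hbddS hH'S
    exact absurd hH'mem (not_lt.mpr this)
  · intro hseq
    have hHpos : 0 < Hscale L h := by
      rcases eq_or_lt_of_le hH0 with h0 | hp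
      · exfalso
        exact hs0 (by rw [hseq, ← h0]; funext k; simp)
      · exact hp
    have hl1s : N = Hscale L h := by
      calc N = ∑ k, s k := hl1
        _ = ∑ k, Hscale L h * h k := by rw [hseq]
        _ = Hscale L h := by rw [← Finset.mul_sum, hhsum, mul_one]
    have hm1 : m = 1 := by
      rw [hm]
      have hterm : ∀ k : {j : Fin K // 0 < h j}, (s k.1 / N) / h k.1 = 1 := by
        intro k
        rw [hl1s, hseq]
        field_simp
        exact div_self k.2.ne'
      rw [iInf_congr hterm]
      exact ciInf_const
    rw [hm1, mul_one, hl1s]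

end
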